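/- Let M = M^0 be a yard with w stacks of height h containing blocks 1,…,n, and for i = 1,…,n define: if block i is present in M^{i−1}, let t_i be its stack and B_i the set of blocks located above i in stack t_i, and let M^i be obtained from M^{i−1} by removing block i and all blocks of B_i; if block i is not present in M^{i−1}, set B_i = ∅ and M^i = M^{i−1}. Let M̃^i be M^i with stack t_i deleted. For a yard Ỹ and a finite block set B, with σ_j the minimum block of stack j of Ỹ (a value larger than every block for an empty stack) and δ_j = h minus the height of stack j, define G^Z(Ỹ,B) = #{ x ∈ B : x > max_j σ_j } and G^B(Ỹ,B) as the minimum over capacity-feasible maps f : B → stacks of Ỹ (#{x : f(x)=j} ≤ δ_j for all j) of #{ x ∈ B : x > σ_{f(x)} }. Assume that for each i a capacity-feasible map of B_i into M̃^i exists. Then Σ_{i=1}^n (|B_i| + G^B(M̃^i, B_i)) ≥ Σ_{i=1}^n (|B_i| + G^Z(M̃^i, B_i)); that is, the Unordered Blocks Assignment Lower Bound dominates the lower bound LB3. -/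

import Mathlib

/-- A state of the yard: each of the `w` stacks is a list of blocks, **ordered from top to
bottom** (the head of the list is the topmost block of the stack). -/
abbrev YState (w : ℕ) := Fin w → List ℕ

/-- `S` is a yard with stacks of height `h` on the blocks `{1, …, n}`: every stack has at
most `h` blocks, and every block `1, …, n` (and no other) occurs exactly once. -/
def IsYard {w : ℕ} (h n : ℕ) (S : YState w) : Prop :=
  (∀ j, (S j).length ≤ h) ∧
    ∀ x : ℕ, (∑ j, (S j).count x) = if x ∈ Finset.Icc 1 n then 1 else 0

/-- The value `σ` of a stack: the minimum block of the list, or `n + 1` (a value larger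
than every block index) for an empty stack. -/
def sigmaVal (n : ℕ) (L : List ℕ) : ℕ := L.foldr min (n + 1)

/-- The list of blocks located above block `i` in stack `j` of the yard `S`
(empty if `i` is not in stack `j`), listed from top to bottom. -/
def aboveList {w : ℕ} (S : YState w) (i : ℕ) (j : Fin w) : List ℕ :=
  if i ∈ S j then (S j).takeWhile (fun y => y != i) else []

/-- The set `B i`: blocks located above block `i` in the yard `S` (empty if `i` is not
present). -/
def aboveFinset {w : ℕ} (S : YState w) (i : ℕ) : Finset ℕ :=
  Finset.univ.biUnion fun j => (aboveList S i j).toFinset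

/-- Remove block `i` together with all blocks above it from the yard `S` (if `i` is not
present, nothing changes). -/
def peel {w : ℕ} (S : YState w) (i : ℕ) : YState w := fun j =>
  if i ∈ S j then (S j).drop (((S j).takeWhile fun y => y != i).length + 1) else S j

/-- `peelSeq S i` is the yard `M^i` of the paper: `M^0 = S` and `M^i` is obtained from
`M^(i-1)` by removing block `i` and all blocks above it. -/
def peelSeq {w : ℕ} (S : YState w) : ℕ → YState w
  | 0 => S
  | i + 1 => peel (peelSeq S i) (i + 1)

/-- `f` is a capacity-feasible map of the block set `B` into the stacks `A` of the yard
`Y` (with height `h`): every block goes to a stack of `A`, and stack `j` receives at most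
`h - (Y j).length` blocks. -/
def CapFeasibleOn {w : ℕ} (h : ℕ) (Y : YState w) (A : Finset (Fin w)) (B : Finset ℕ)
    (f : ℕ → Fin w) : Prop :=
  (∀ x ∈ B, f x ∈ A) ∧ ∀ j ∈ A, (B.filter fun x => f x = j).card ≤ h - (Y j).length

/-- `G^Z(Y, B)` over the stacks `A`: the number of blocks of `B` larger than the maximum
stack value. -/
def GZval {w : ℕ} (n : ℕ) (Y : YState w) (A : Finset (Fin w)) (B : Finset ℕ) : ℕ :=
  (B.filter fun x => A.sup (fun j => sigmaVal n (Y j)) < x).card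

/-- `G^B(Y, B)` over the stacks `A`: the minimum, over capacity-feasible maps `f` of `B`
into the stacks of `A`, of the number of blocks `x ∈ B` with `x > σ (f x)`. -/
noncomputable def GBval {w : ℕ} (h n : ℕ) (Y : YState w) (A : Finset (Fin w))
    (B : Finset ℕ) : ℕ :=
  sInf {c : ℕ | ∃ f : ℕ → Fin w, CapFeasibleOn h Y A B f ∧
    c = (B.filter fun x => sigmaVal n (Y (f x)) < x).card}

/-- (The Unordered Blocks Assignment Lower Bound dominates LB3.)
Let `M^i = peelSeq S i` be the peeling sequence of the yard `S`, `B i` the blocks above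
block `i` in `M^(i-1)`, `t i` the stack of block `i` in `M^(i-1)` (whenever `i` is
present), and let `M̃^i` be `M^i` with stack `t i` deleted.  If for each `i` a
capacity-feasible map of `B i` into `M̃^i` exists, then
`∑ i (|B i| + G^Z(M̃^i, B i)) ≤ ∑ i (|B i| + G^B(M̃^i, B i))`. -/
theorem ubalb_dominates_lb3 {w h n : ℕ} (hw : 0 < w) (S : YState w)
    (hyard : IsYard h n S) (t : ℕ → Fin w)
    (ht : ∀ i, 1 ≤ i → i ≤ n → ∀ j, i ∈ peelSeq S (i - 1) j → j = t i)
    (hfeas : ∀ i ∈ Finset.Icc 1 n, ∃ f : ℕ → Fin w,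
      CapFeasibleOn h (peelSeq S i) (Finset.univ.erase (t i))
        (aboveFinset (peelSeq S (i - 1)) i) f) :
    ∑ i ∈ Finset.Icc 1 n,
        ((aboveFinset (peelSeq S (i - 1)) i).card +
          GZval n (peelSeq S i) (Finset.univ.erase (t i))
            (aboveFinset (peelSeq S (i - 1)) i)) ≤
      ∑ i ∈ Finset.Icc 1 n,
        ((aboveFinset (peelSeq S (i - 1)) i).card +
          GBval h n (peelSeq S i) (Finset.univ.erase (t i))
            (aboveFinset (peelSeq S (i - 1)) i)) := by
  refine Finset.sum_le_sum fun i hi => Nat.add_le_add_left ?_ _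
  set Y := peelSeq S i
  set A := Finset.univ.erase (t i)
  set B := aboveFinset (peelSeq S (i - 1)) i
  obtain ⟨f, hf⟩ := hfeas i hi
  refine le_csInf ⟨_, f, hf, rfl⟩ ?_
  rintro c ⟨g, hg, rfl⟩
  refine Finset.card_le_card fun x hx => ?_
  simp only [Finset.mem_filter] at hx ⊢
  exact ⟨hx.1, lt_of_le_of_lt (Finset.le_sup (f := fun j => sigmaVal n (Y j)) (hg.1 x hx.1)) hx.2⟩
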